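/- Let d ≥ 2 be an integer and let N be a real number with N ≥ N(d). Then for every Δ ∈ [-log d, log d], M(Δ,d) ≥ N·(exp(Δ/N) - 1 - Δ/N). -/

import Mathlib

open scoped ENNReal BigOperators

noncomputable section

/-- Binary entropy (natural log), with Lean's convention `Real.log 0 = 0`. -/
def binEntropy' (x : ℝ) : ℝ := -(x * Real.log x) - (1 - x) * Real.log (1 - x)

/-- Binary relative entropy, valued in `[0,∞]`. -/
def binRelEntropy (x y : ℝ) : ℝ≥0∞ :=
  if (y = 0 ∧ 0 < x) ∨ (y = 1 ∧ x < 1) then ⊤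
  else ENNReal.ofReal (x * Real.log (x / y) + (1 - x) * Real.log ((1 - x) / (1 - y)))

/-- `M(Δ,d)`: infimum of binary relative entropies under the entropy-difference constraint. -/
def Mfun (Δ : ℝ) (d : ℕ) : ℝ≥0∞ :=
  sInf {m : ℝ≥0∞ | ∃ s r : ℝ, s ∈ Set.Icc (0:ℝ) (((d:ℝ) - 1) / d) ∧
    r ∈ Set.Icc (0:ℝ) (((d:ℝ) - 1) / d) ∧
    binEntropy' s - binEntropy' r + (s - r) * Real.log ((d:ℝ) - 1) = Δ ∧
    m = binRelEntropy s r}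

/-- Shannon entropy of a probability vector on `Fin d` (natural log). -/
def shEntropy {d : ℕ} (p : Fin d → ℝ) : ℝ := ∑ i, -(p i * Real.log (p i))

/-- Relative entropy between probability vectors on `Fin d`, valued in `[0,∞]`. -/
def relEntropy {d : ℕ} (p q : Fin d → ℝ) : ℝ≥0∞ :=
  if ∀ i, q i = 0 → p i = 0
  then ENNReal.ofReal (∑ i, p i * Real.log (p i / q i))
  else ⊤

/-- `N(d) = sup_{0<r<1/2} r(1-r) (log(((1-r)/r)(d-1)))²`. -/
def Nfun (d : ℕ) : ℝ :=
  sSup {v : ℝ | ∃ r : ℝ, 0 < r ∧ r < 1/2 ∧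
    v = r * (1 - r) * (Real.log ((1 - r) / r * ((d:ℝ) - 1)))^2}

lemma Nfun_bddAbove (d : ℕ) (hd : 2 ≤ d) :
    BddAbove {v : ℝ | ∃ r : ℝ, 0 < r ∧ r < 1/2 ∧
      v = r * (1 - r) * (Real.log ((1 - r) / r * ((d:ℝ) - 1)))^2} := by
  have hd1 : (1:ℝ) ≤ (d:ℝ) - 1 := by
    have : (2:ℝ) ≤ d := by exact_mod_cast hd
    linarith
  refine ⟨4 * ((d:ℝ) - 1), ?_⟩
  rintro v ⟨t, ht0, ht1, rfl⟩
  set y : ℝ := (1 - t) / t * ((d:ℝ) - 1) with hy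
  set z : ℝ := ((d:ℝ) - 1) / t with hz
  have hz0 : 0 < z := by positivity
  have hy1 : 1 ≤ y := by
    rw [hy, div_mul_eq_mul_div, le_div_iff₀ ht0]
    nlinarith
  have hyz : y ≤ z := by
    rw [hy, hz, div_mul_eq_mul_div, div_le_div_iff₀ ht0 ht0]
    nlinarith [mul_nonneg (mul_nonneg (by linarith : (0:ℝ) ≤ (d:ℝ)-1) ht0.le) ht0.le]
  have hlogy : 0 ≤ Real.log y := Real.log_nonneg hy1
  have hlog2 : Real.log y ≤ 2 * Real.sqrt z := by
    have h1 : Real.log y ≤ Real.log z := Real.log_le_log (by linarith) hyz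
    have h2 : Real.log (Real.sqrt z) = Real.log z / 2 := Real.log_sqrt hz0.le
    have h3 : Real.log (Real.sqrt z) ≤ Real.sqrt z - 1 :=
      Real.log_le_sub_one_of_pos (Real.sqrt_pos.mpr hz0)
    nlinarith [Real.sqrt_nonneg z]
  have hsq : (Real.log y)^2 ≤ (2*Real.sqrt z)^2 := by
    apply pow_le_pow_left₀ hlogy hlog2
  have h4z : (2*Real.sqrt z)^2 = 4*z := by
    rw [mul_pow, Real.sq_sqrt hz0.le]; norm_num
  have htz : t * z = (d:ℝ) - 1 := by rw [hz]; field_simp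
  nlinarith [mul_nonneg (mul_nonneg ht0.le hz0.le) ht0.le,
    mul_le_mul_of_nonneg_left (hsq.trans_eq h4z) (by nlinarith : (0:ℝ) ≤ t*(1-t))]

lemma key_sup (d : ℕ) (hd : 2 ≤ d) (p : ℝ) (h0 : 0 < p) (h1 : p < 1)
    (hlog : 0 ≤ Real.log ((1 - p) / p * ((d:ℝ) - 1))) :
    p * (1 - p) * (Real.log ((1 - p) / p * ((d:ℝ) - 1)))^2 ≤ Nfun d := by
  have bdd := Nfun_bddAbove d hd
  have hd1 : (1:ℝ) ≤ (d:ℝ) - 1 := by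
    have : (2:ℝ) ≤ d := by exact_mod_cast hd
    linarith
  rcases lt_trichotomy p (1/2) with hp | hp | hp
  · exact le_csSup bdd ⟨p, h0, hp, rfl⟩
  · subst hp
    set φ : ℝ → ℝ := fun t => t * (1 - t) * (Real.log ((1 - t) / t * ((d:ℝ) - 1)))^2 with hφ
    have hint : ContinuousAt (fun t : ℝ => (1 - t) / t * ((d:ℝ) - 1)) (1/2) := by
      apply ContinuousAt.mul _ continuousAt_const
      exact ContinuousAt.div (by fun_prop) (by fun_prop) (by norm_num)
    have hval : (1 - (1/2:ℝ)) / (1/2) * ((d:ℝ) - 1) ≠ 0 := by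
      norm_num; linarith
    have hcont : ContinuousAt φ (1/2) := by
      apply ContinuousAt.mul
      · fun_prop
      · exact (hint.log hval).pow 2
    have htend : Filter.Tendsto φ (nhdsWithin (1/2) (Set.Iio (1/2))) (nhds (φ (1/2))) :=
      (hcont.tendsto).mono_left nhdsWithin_le_nhds
    have hev : ∀ᶠ t in nhdsWithin (1/2:ℝ) (Set.Iio (1/2)), φ t ≤ Nfun d := by
      filter_upwards [Ioo_mem_nhdsLT (by norm_num : (0:ℝ) < 1/2)] with t ht
      exact le_csSup bdd ⟨t, ht.1, ht.2, rfl⟩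
    exact le_of_tendsto htend hev
  · have h0' : 0 < 1 - p := by linarith
    have hm : (1-p) * (1 - (1-p)) * (Real.log ((1 - (1-p)) / (1-p) * ((d:ℝ) - 1)))^2 ≤ Nfun d :=
      le_csSup bdd ⟨1-p, h0', by linarith, rfl⟩
    have e1 : (1 - (1 - p)) = p := by ring
    rw [e1] at hm
    refine le_trans ?_ hm
    have hApos : 0 < (1 - p) / p * ((d:ℝ) - 1) := by positivity
    have hAB : (1 - p) / p * ((d:ℝ) - 1) ≤ p / (1 - p) * ((d:ℝ) - 1) := by
      apply mul_le_mul_of_nonneg_right _ (by linarith)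
      rw [div_le_div_iff₀ h0 h0']
      nlinarith
    have hlogAB : Real.log ((1 - p) / p * ((d:ℝ) - 1)) ≤ Real.log (p / (1 - p) * ((d:ℝ) - 1)) :=
      Real.log_le_log hApos hAB
    have hsq : (Real.log ((1 - p) / p * ((d:ℝ) - 1)))^2 ≤ (Real.log (p / (1 - p) * ((d:ℝ) - 1)))^2 :=
      pow_le_pow_left₀ hlog hlogAB 2
    nlinarith [mul_le_mul_of_nonneg_left hsq (by nlinarith : (0:ℝ) ≤ p * (1 - p))]

lemma mgf_bound (d : ℕ) (hd : 2 ≤ d) (r N lam : ℝ) (hr0 : 0 < r) (hr1 : r < 1)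
    (hL : 0 ≤ Real.log ((1 - r) / r * ((d:ℝ) - 1)))
    (hNfun : Nfun d ≤ N) (hNpos : 0 < N) (hlam : lam < 1) :
    Real.log (r * Real.exp ((1 - r) * Real.log ((1 - r) / r * ((d:ℝ) - 1)) * lam)
      + (1 - r) * Real.exp (-(r * Real.log ((1 - r) / r * ((d:ℝ) - 1))) * lam))
      ≤ N * (-lam - Real.log (1 - lam)) := by
  have hd1 : (1:ℝ) ≤ (d:ℝ) - 1 := by
    have : (2:ℝ) ≤ d := by exact_mod_cast hd
    linarith
  have hr1' : 0 < 1 - r := by linarith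
  set L : ℝ := Real.log ((1 - r) / r * ((d:ℝ) - 1)) with hLdef
  set a : ℝ := (1 - r) * L with ha
  set b : ℝ := r * L with hb
  set S : ℝ → ℝ := fun x => r * Real.exp (a * x) + (1 - r) * Real.exp (-b * x) with hS
  have hSpos : ∀ x, 0 < S x := fun x => by positivity
  set S1 : ℝ → ℝ := fun x => r * a * Real.exp (a * x) - (1 - r) * b * Real.exp (-b * x) with hS1
  set S2 : ℝ → ℝ := fun x => r * a^2 * Real.exp (a * x) + (1 - r) * b^2 * Real.exp (-b * x) with hS2
  have hSd : ∀ x, HasDerivAt S (S1 x) x := by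
    intro x
    have h1 : HasDerivAt (fun x : ℝ => a * x) a x := by
      simpa using (hasDerivAt_id x).const_mul a
    have h2 : HasDerivAt (fun x : ℝ => -b * x) (-b) x := by
      simpa using (hasDerivAt_id x).const_mul (-b)
    have h3 := (h1.exp.const_mul r).add (h2.exp.const_mul (1 - r))
    refine h3.congr_deriv ?_
    simp only [hS1]; ring
  have hS1d : ∀ x, HasDerivAt S1 (S2 x) x := by
    intro x
    have h1 : HasDerivAt (fun x : ℝ => a * x) a x := by
      simpa using (hasDerivAt_id x).const_mul a
    have h2 : HasDerivAt (fun x : ℝ => -b * x) (-b) x := by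
      simpa using (hasDerivAt_id x).const_mul (-b)
    have h3 := (h1.exp.const_mul (r * a)).sub (h2.exp.const_mul ((1 - r) * b))
    refine h3.congr_deriv ?_
    simp only [hS2]; ring
  set g : ℝ → ℝ := fun x => N * (-x - Real.log (1 - x)) - Real.log (S x) with hg
  set g1 : ℝ → ℝ := fun x => N * (x / (1 - x)) - S1 x / S x with hg1
  have hgd : ∀ x ∈ Set.Iio (1:ℝ), HasDerivAt g (g1 x) x := by
    intro x hx
    have hx1 : (0:ℝ) < 1 - x := by simp only [Set.mem_Iio] at hx; linarith
    have h1 : HasDerivAt (fun x : ℝ => 1 - x) (-1) x := by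
      exact (hasDerivAt_id x).const_sub 1
    have h2 : HasDerivAt (fun x : ℝ => -x - Real.log (1 - x)) (-1 - (-1)/(1-x)) x := by
      exact ((hasDerivAt_id x).neg).sub (h1.log hx1.ne')
    have h3 := (h2.const_mul N).sub ((hSd x).log (hSpos x).ne')
    refine h3.congr_deriv ?_
    simp only [hg1]
    field_simp
    ring
  have hg1d : ∀ x ∈ Set.Iio (1:ℝ),
      HasDerivAt g1 (N / (1-x)^2 - (S2 x * S x - (S1 x)^2) / (S x)^2) x := by
    intro x hx
    have hx1 : (0:ℝ) < 1 - x := by simp only [Set.mem_Iio] at hx; linarith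
    have h1 : HasDerivAt (fun x : ℝ => 1 - x) (-1) x := by
      exact (hasDerivAt_id x).const_sub 1
    have h2 : HasDerivAt (fun x : ℝ => x / (1 - x))
        ((1 * (1 - x) - x * (-1)) / (1 - x)^2) x := (hasDerivAt_id x).div h1 hx1.ne'
    have h3 : HasDerivAt (fun x => S1 x / S x)
        ((S2 x * S x - S1 x * S1 x) / (S x)^2) x := (hS1d x).div (hSd x) (hSpos x).ne'
    have h4 := (h2.const_mul N).sub h3
    refine h4.congr_deriv ?_
    ring
  -- second derivative nonneg
  have hg2 : ∀ x ∈ Set.Iio (1:ℝ), 0 ≤ N / (1-x)^2 - (S2 x * S x - (S1 x)^2) / (S x)^2 := by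
    intro x hx
    have hx1 : (0:ℝ) < 1 - x := by simp only [Set.mem_Iio] at hx; linarith
    have hE1 : (0:ℝ) < Real.exp (a*x) := Real.exp_pos _
    have hE2 : (0:ℝ) < Real.exp (-b*x) := Real.exp_pos _
    have hvar : S2 x * S x - (S1 x)^2
        = r * (1 - r) * Real.exp (a*x) * Real.exp (-b*x) * L^2 := by
      simp only [hS1, hS2, hS, ha, hb]
      ring
    set p : ℝ := r * Real.exp (a*x) / S x with hp
    have hp0 : 0 < p := by positivity
    have hp1 : p < 1 := by
      rw [hp, div_lt_one (hSpos x)]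
      simp only [hS]
      nlinarith
    have hpid : (1 - p) = (1 - r) * Real.exp (-b*x) / S x := by
      rw [hp, eq_div_iff (hSpos x).ne', sub_mul, div_mul_cancel₀ _ (hSpos x).ne']
      simp only [hS]
      ring
    have hargpos : (0:ℝ) < (1 - r) / r * ((d:ℝ) - 1) := by positivity
    have hlogid : Real.log ((1 - p) / p * ((d:ℝ) - 1)) = (1 - x) * L := by
      have e2 : (1 - p) / p * ((d:ℝ) - 1)
          = ((1 - r) / r * ((d:ℝ) - 1)) * Real.exp (-b*x - a*x) := by
        rw [hpid, hp, Real.exp_sub]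
        field_simp
        exact div_self (hSpos x).ne'
      rw [e2, Real.log_mul (by positivity) (Real.exp_ne_zero _), Real.log_exp, ← hLdef]
      simp only [ha, hb]
      ring
    have hkey : p * (1 - p) * ((1 - x) * L)^2 ≤ N := by
      have := key_sup d hd p hp0 hp1 (by rw [hlogid]; positivity)
      rw [hlogid] at this
      exact this.trans hNfun
    have hpp : p * (1 - p) = r * (1 - r) * Real.exp (a*x) * Real.exp (-b*x) / (S x)^2 := by
      rw [hp, hpid]
      field_simp
    rw [hpp] at hkey
    have hS2pos : (0:ℝ) < (S x)^2 := by positivity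
    rw [div_mul_eq_mul_div, div_le_iff₀ hS2pos] at hkey
    rw [hvar, sub_nonneg, div_le_div_iff₀ hS2pos (by positivity : (0:ℝ) < (1-x)^2)]
    nlinarith [hkey]
  have hg1cont : ContinuousOn g1 (Set.Iio 1) := fun x hx =>
    ((hg1d x hx).differentiableAt).continuousAt.continuousWithinAt
  have hg1diff : DifferentiableOn ℝ g1 (interior (Set.Iio (1:ℝ))) := by
    rw [interior_Iio]
    exact fun x hx => ((hg1d x hx).differentiableAt).differentiableWithinAt
  have hg1mono : MonotoneOn g1 (Set.Iio 1) := by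
    apply monotoneOn_of_deriv_nonneg (convex_Iio 1) hg1cont hg1diff
    intro x hx
    rw [interior_Iio] at hx
    rw [(hg1d x hx).deriv]
    exact hg2 x hx
  have hg10 : g1 0 = 0 := by
    have h0 : S1 0 = 0 := by
      simp only [hS1, ha, hb]
      simp [Real.exp_zero]
      ring
    simp [hg1, h0]
  have hg0 : g 0 = 0 := by
    have h0 : S 0 = 1 := by simp [hS]
    simp [hg, h0]
  have hgoal : 0 ≤ g lam := by
    rcases le_or_gt 0 lam with h0lam | h0lam
    · have hsub : Set.Icc (0:ℝ) lam ⊆ Set.Iio 1 := fun y hy => lt_of_le_of_lt hy.2 hlam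
      have hmono : MonotoneOn g (Set.Icc 0 lam) := by
        apply monotoneOn_of_deriv_nonneg (convex_Icc 0 lam)
        · exact fun y hy => ((hgd y (hsub hy)).differentiableAt).continuousAt.continuousWithinAt
        · rw [interior_Icc]
          exact fun y hy =>
            ((hgd y (hsub (Set.mem_Icc_of_Ioo hy))).differentiableAt).differentiableWithinAt
        · intro y hy
          rw [interior_Icc] at hy
          have hy' : y ∈ Set.Iio 1 := hsub (Set.mem_Icc_of_Ioo hy)
          rw [(hgd y hy').deriv]
          have := hg1mono (show (0:ℝ) ∈ Set.Iio 1 by norm_num) hy' hy.1.le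
          rw [hg10] at this
          exact this
      have := hmono (Set.left_mem_Icc.mpr h0lam) (Set.right_mem_Icc.mpr h0lam) h0lam
      rw [hg0] at this
      exact this
    · have hsub : Set.Icc lam (0:ℝ) ⊆ Set.Iio 1 := fun y hy => lt_of_le_of_lt hy.2 one_pos
      have hanti : AntitoneOn g (Set.Icc lam 0) := by
        apply antitoneOn_of_deriv_nonpos (convex_Icc lam 0)
        · exact fun y hy => ((hgd y (hsub hy)).differentiableAt).continuousAt.continuousWithinAt
        · rw [interior_Icc]
          exact fun y hy =>
            ((hgd y (hsub (Set.mem_Icc_of_Ioo hy))).differentiableAt).differentiableWithinAt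
        · intro y hy
          rw [interior_Icc] at hy
          have hy' : y ∈ Set.Iio 1 := hsub (Set.mem_Icc_of_Ioo hy)
          rw [(hgd y hy').deriv]
          have := hg1mono hy' (show (0:ℝ) ∈ Set.Iio 1 by norm_num) hy.2.le
          rw [hg10] at this
          exact this
      have := hanti (Set.left_mem_Icc.mpr h0lam.le) (Set.right_mem_Icc.mpr h0lam.le) h0lam.le
      rw [hg0] at this
      exact this
  have hfin : Real.log (S lam) ≤ N * (-lam - Real.log (1 - lam)) := by
    simp only [hg] at hgoal
    linarith
  simp only [hS] at hfin
  exact hfin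

lemma gibbs (s r f1 f2 : ℝ) (hs0 : 0 ≤ s) (hs1 : s < 1) (hr0 : 0 < r) (hr1 : r < 1) :
    s * f1 + (1 - s) * f2 ≤ s * Real.log (s/r) + (1 - s) * Real.log ((1-s)/(1-r))
      + Real.log (r * Real.exp f1 + (1 - r) * Real.exp f2) := by
  have hr1' : 0 < 1 - r := by linarith
  have hs1' : 0 < 1 - s := by linarith
  have hE1 : 0 < Real.exp f1 := Real.exp_pos _
  have hE2 : 0 < Real.exp f2 := Real.exp_pos _
  set T : ℝ := r * Real.exp f1 + (1 - r) * Real.exp f2 with hT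
  have hT0 : 0 < T := by positivity
  rcases eq_or_lt_of_le hs0 with hs | hs
  · -- s = 0
    rw [← hs]
    have h1 : Real.log ((1 - r) * Real.exp f2) ≤ Real.log T := by
      apply Real.log_le_log (by positivity)
      nlinarith
    rw [Real.log_mul hr1'.ne' (Real.exp_ne_zero _), Real.log_exp] at h1
    have h2 : Real.log ((1 - 0) / (1 - r)) = - Real.log (1 - r) := by
      rw [Real.log_div (by norm_num) hr1'.ne']
      simp
    rw [h2]
    simp only [sub_zero, zero_mul, one_mul, zero_add]
    linarith
  · -- 0 < s
    have hq1 : 0 < r * Real.exp f1 / (s * T) := by positivity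
    have hq2 : 0 < (1 - r) * Real.exp f2 / ((1 - s) * T) := by positivity
    have h1 : Real.log (r * Real.exp f1 / (s * T)) ≤ r * Real.exp f1 / (s * T) - 1 :=
      Real.log_le_sub_one_of_pos hq1
    have h2 : Real.log ((1 - r) * Real.exp f2 / ((1 - s) * T))
        ≤ (1 - r) * Real.exp f2 / ((1 - s) * T) - 1 :=
      Real.log_le_sub_one_of_pos hq2
    have e1 : Real.log (r * Real.exp f1 / (s * T))
        = Real.log r + f1 - Real.log s - Real.log T := by
      rw [Real.log_div (by positivity) (by positivity),
        Real.log_mul hr0.ne' (Real.exp_ne_zero _),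
        Real.log_mul hs.ne' hT0.ne', Real.log_exp]
      ring
    have e2 : Real.log ((1 - r) * Real.exp f2 / ((1 - s) * T))
        = Real.log (1 - r) + f2 - Real.log (1 - s) - Real.log T := by
      rw [Real.log_div (by positivity) (by positivity),
        Real.log_mul hr1'.ne' (Real.exp_ne_zero _),
        Real.log_mul hs1'.ne' hT0.ne', Real.log_exp]
      ring
    have e3 : s * (r * Real.exp f1 / (s * T)) = r * Real.exp f1 / T := by
      field_simp
    have e4 : (1 - s) * ((1 - r) * Real.exp f2 / ((1 - s) * T)) = (1 - r) * Real.exp f2 / T := by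
      field_simp
    have e5 : r * Real.exp f1 / T + (1 - r) * Real.exp f2 / T = 1 := by
      field_simp
      exact hT.symm
    have e6 : Real.log (s / r) = Real.log s - Real.log r := Real.log_div hs.ne' hr0.ne'
    have e7 : Real.log ((1 - s) / (1 - r)) = Real.log (1 - s) - Real.log (1 - r) :=
      Real.log_div hs1'.ne' hr1'.ne'
    have h1' := mul_le_mul_of_nonneg_left h1 hs0
    have h2' := mul_le_mul_of_nonneg_left h2 hs1'.le
    rw [e1] at h1'
    rw [e2] at h2'
    rw [e6, e7]
    nlinarith [h1', h2', e3, e4, e5]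
/-- exponential-type lower bound on `M(Δ,d)` for any `N ≥ N(d)`. -/
theorem Mfun_ge_exp_bound (d : ℕ) (hd : 2 ≤ d) (N : ℝ) (hN : Nfun d ≤ N)
    (Δ : ℝ) (hΔ : Δ ∈ Set.Icc (-Real.log d) (Real.log d)) :
    ENNReal.ofReal (N * (Real.exp (Δ / N) - 1 - Δ / N)) ≤ Mfun Δ d := by
  rcases le_or_gt N 0 with hN0 | hNpos
  · have h0 : N * (Real.exp (Δ / N) - 1 - Δ / N) ≤ 0 := by
      apply mul_nonpos_of_nonpos_of_nonneg hN0
      nlinarith [Real.add_one_le_exp (Δ / N)]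
    rw [ENNReal.ofReal_of_nonpos h0]
    simp
  apply le_sInf
  rintro m ⟨s, r, ⟨hs0, hs1⟩, ⟨hr0, hr1⟩, hcon, rfl⟩
  have hd2 : (2:ℝ) ≤ (d:ℝ) := by exact_mod_cast hd
  have hdpos : (0:ℝ) < d := by linarith
  have hfrac1 : ((d:ℝ) - 1) / d < 1 := by
    rw [div_lt_one hdpos]; linarith
  have hs1' : s < 1 := lt_of_le_of_lt hs1 hfrac1
  have hr1' : r < 1 := lt_of_le_of_lt hr1 hfrac1
  rcases eq_or_lt_of_le hr0 with hr | hr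
  · -- r = 0
    rcases eq_or_lt_of_le hs0 with hs | hs
    · -- s = 0
      have hΔ0 : Δ = 0 := by
        rw [← hcon, ← hs, ← hr]
        simp [binEntropy']
      rw [hΔ0]
      simp
    · -- 0 < s
      have : binRelEntropy s r = ⊤ := by
        rw [binRelEntropy, if_pos (Or.inl ⟨hr.symm, hs⟩)]
      rw [this]
      exact le_top
  · -- 0 < r
    have hDfin : binRelEntropy s r
        = ENNReal.ofReal (s * Real.log (s / r) + (1 - s) * Real.log ((1 - s) / (1 - r))) := by
      rw [binRelEntropy, if_neg]
      push_neg
      constructor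
      · intro h; exact absurd h.symm hr.ne
      · intro h; exact absurd h (by linarith)
    rw [hDfin]
    apply ENNReal.ofReal_le_ofReal
    -- real-number inequality
    set L : ℝ := Real.log ((1 - r) / r * ((d:ℝ) - 1)) with hLdef
    have hrd : r * d ≤ (d:ℝ) - 1 := by rwa [le_div_iff₀ hdpos] at hr1
    have hargone : 1 ≤ (1 - r) / r * ((d:ℝ) - 1) := by
      rw [div_mul_eq_mul_div, le_div_iff₀ hr]
      nlinarith
    have hL : 0 ≤ L := Real.log_nonneg hargone
    set DD : ℝ := s * Real.log (s / r) + (1 - s) * Real.log ((1 - s) / (1 - r)) with hDDdef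
    -- identity : Δ = (s - r) * L - DD
    have hslog : s * Real.log (s / r) = s * Real.log s - s * Real.log r := by
      rcases eq_or_lt_of_le hs0 with hs | hs
      · simp [← hs]
      · rw [Real.log_div hs.ne' hr.ne']; ring
    have h1slog : (1 - s) * Real.log ((1 - s) / (1 - r))
        = (1 - s) * Real.log (1 - s) - (1 - s) * Real.log (1 - r) := by
      rw [Real.log_div (by linarith : (1:ℝ) - s ≠ 0) (by linarith : (1:ℝ) - r ≠ 0)]; ring
    have hLsplit : L = (Real.log (1 - r) - Real.log r) + Real.log ((d:ℝ) - 1) := by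
      rw [hLdef, Real.log_mul (div_ne_zero (by linarith) hr.ne') (by nlinarith : (d:ℝ) - 1 ≠ 0),
        Real.log_div (by linarith : (1:ℝ) - r ≠ 0) hr.ne']
    have hId : Δ = (s - r) * L - DD := by
      rw [← hcon, hDDdef, hslog, h1slog, hLsplit]
      simp only [binEntropy']
      ring
    set u : ℝ := Δ / N with hu
    have hΔN : Δ = N * u := by rw [hu]; field_simp
    set lam : ℝ := 1 - Real.exp (-u) with hlam
    have hlam1 : lam < 1 := by
      have := Real.exp_pos (-u); rw [hlam]; linarith
    have hMGF := mgf_bound d hd r N lam hr hr1' hL hN hNpos hlam1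
    rw [← hLdef] at hMGF
    have hG := gibbs s r ((1 - r) * L * lam) (-(r * L) * lam) hs0 hs1' hr hr1'
    have hsum : s * ((1 - r) * L * lam) + (1 - s) * (-(r * L) * lam) = ((s - r) * L) * lam := by
      ring
    rw [hsum] at hG
    have hlog1lam : Real.log (1 - lam) = -u := by
      rw [hlam]; simp [Real.log_exp]
    rw [hlog1lam] at hMGF
    have hkey : ((s - r) * L) * lam ≤ DD + N * (-lam + u) := by
      calc ((s - r) * L) * lam
          ≤ (s * Real.log (s/r) + (1-s) * Real.log ((1-s)/(1-r)))
            + Real.log (r * Real.exp ((1 - r) * L * lam) + (1 - r) * Real.exp (-(r * L) * lam)) := hG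
        _ ≤ (s * Real.log (s/r) + (1-s) * Real.log ((1-s)/(1-r))) + N * (-lam - -u) :=
            add_le_add_right hMGF _
        _ = DD + N * (-lam + u) := by rw [hDDdef]; ring
    have hsrL : (s - r) * L = N * u + DD := by
      rw [hΔN] at hId; linarith
    rw [hsrL, hlam] at hkey
    set E : ℝ := Real.exp (-u) with hE
    have hEexp : E * Real.exp u = 1 := by
      rw [hE, ← Real.exp_add]; simp
    have hEpos : 0 < E := Real.exp_pos _
    have hupos : 0 < Real.exp u := Real.exp_pos _
    clear_value E
    clear_value DD
    clear_value u
    clear_value L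
    have hstep : N - N * E - E * N * u ≤ E * DD := by linarith only [hkey]
    have h2 : (N - N * E - E * N * u) * Real.exp u ≤ (E * DD) * Real.exp u :=
      mul_le_mul_of_nonneg_right hstep hupos.le
    have h3 : (E * DD) * Real.exp u = DD := by
      rw [mul_comm E DD, mul_assoc, hEexp, mul_one]
    have h4 : (N - N * E - E * N * u) * Real.exp u = N * Real.exp u - N - N * u := by
      linear_combination (-(N) - N * u) * hEexp
    rw [h3, h4] at h2
    have : N * (Real.exp u - 1 - u) ≤ DD := by linarith only [h2]
    exact this


end
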